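/- arXiv:2604.02231 — 2 statements merged into one kernel-verified Lean document; each statement's English description precedes it below -/
import Mathlib

section
/- If for every Q ∈ R^{[m,n]} the solution set SOL(M,Q) of the tensor linear complementarity problem is convex, then M is T-column sufficient. -/
open Finset

/-- The contraction product: `(tmul M Z) i = ∑ j, M i j * Z j`. -/
def tmul {m n : ℕ} (M : (Fin m → Fin n) → (Fin m → Fin n) → ℝ)
    (Z : (Fin m → Fin n) → ℝ) : (Fin m → Fin n) → ℝ :=
  fun i => ∑ j : Fin m → Fin n, M i j * Z j

/-- Inner product of tensors. -/
def tinner {m n : ℕ} (A B : (Fin m → Fin n) → ℝ) : ℝ :=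
  ∑ i : Fin m → Fin n, A i * B i

/-- `M` is T-column sufficient. -/
def TColSuff {m n : ℕ} (M : (Fin m → Fin n) → (Fin m → Fin n) → ℝ) : Prop :=
  ∀ Z : (Fin m → Fin n) → ℝ,
    (∀ i, Z i * tmul M Z i ≤ 0) → (∀ i, Z i * tmul M Z i = 0)

/-- `M` is T-column sufficient on the nonnegative orthant. -/
def TColSuffPlus {m n : ℕ} (M : (Fin m → Fin n) → (Fin m → Fin n) → ℝ) : Prop :=
  ∀ Z : (Fin m → Fin n) → ℝ, (∀ i, 0 ≤ Z i) →
    (∀ i, Z i * tmul M Z i ≤ 0) → (∀ i, Z i * tmul M Z i = 0)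

/-- `M` is a T-P tensor. -/
def TP {m n : ℕ} (M : (Fin m → Fin n) → (Fin m → Fin n) → ℝ) : Prop :=
  ∀ Z : (Fin m → Fin n) → ℝ, Z ≠ 0 → ∃ i, 0 < Z i * tmul M Z i

/-- `M` is T-non-degenerate. -/
def TND {m n : ℕ} (M : (Fin m → Fin n) → (Fin m → Fin n) → ℝ) : Prop :=
  ∀ Z : (Fin m → Fin n) → ℝ, Z ≠ 0 → ∃ i, Z i * tmul M Z i ≠ 0

/-- `M` is T-positive semidefinite. -/
def TPSD {m n : ℕ} (M : (Fin m → Fin n) → (Fin m → Fin n) → ℝ) : Prop :=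
  ∀ Z : (Fin m → Fin n) → ℝ, 0 ≤ tinner Z (tmul M Z)

/-- `M` is T-copositive. -/
def TCopositive {m n : ℕ} (M : (Fin m → Fin n) → (Fin m → Fin n) → ℝ) : Prop :=
  ∀ Z : (Fin m → Fin n) → ℝ, (∀ i, 0 ≤ Z i) → 0 ≤ tinner Z (tmul M Z)

/-- `M` is T-semi-positive. -/
def TSemiPos {m n : ℕ} (M : (Fin m → Fin n) → (Fin m → Fin n) → ℝ) : Prop :=
  ∀ Z : (Fin m → Fin n) → ℝ, (∀ i, 0 ≤ Z i) → Z ≠ 0 →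
    ∃ i, 0 < Z i ∧ 0 ≤ tmul M Z i

/-- The solution set of the TLCP. -/
def SOL {m n : ℕ} (M : (Fin m → Fin n) → (Fin m → Fin n) → ℝ)
    (Q : (Fin m → Fin n) → ℝ) : Set ((Fin m → Fin n) → ℝ) :=
  {Z | (∀ i, 0 ≤ Z i) ∧ (∀ i, 0 ≤ tmul M Z i + Q i) ∧
    tinner Z (fun i => tmul M Z i + Q i) = 0}

lemma tmul_sub {m n : ℕ} (M : (Fin m → Fin n) → (Fin m → Fin n) → ℝ)
    (A B : (Fin m → Fin n) → ℝ) (i : Fin m → Fin n) :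
    tmul M (fun j => A j - B j) i = tmul M A i - tmul M B i := by
  simp only [tmul, mul_sub, Finset.sum_sub_distrib]

lemma tmul_combo {m n : ℕ} (M : (Fin m → Fin n) → (Fin m → Fin n) → ℝ)
    (A B : (Fin m → Fin n) → ℝ) (a b : ℝ) (i : Fin m → Fin n) :
    tmul M (a • A + b • B) i = a * tmul M A i + b * tmul M B i := by
  simp only [tmul, Pi.add_apply, Pi.smul_apply, smul_eq_mul, Finset.mul_sum,
    ← Finset.sum_add_distrib]
  exact Finset.sum_congr rfl fun j _ => by ring

theorem stmt6 {m n : ℕ} (M : (Fin m → Fin n) → (Fin m → Fin n) → ℝ)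
    (h : ∀ Q : (Fin m → Fin n) → ℝ, Convex ℝ (SOL M Q)) : TColSuff M := by
  intro Z hZ
  set Zp : (Fin m → Fin n) → ℝ := fun i => max (Z i) 0 with hZp
  set Zm : (Fin m → Fin n) → ℝ := fun i => max (-Z i) 0 with hZm
  set Q : (Fin m → Fin n) → ℝ := fun i => max (tmul M Z i) 0 - tmul M Zp i with hQ
  have hZmZ : Zm = fun j => Zp j - Z j := by
    funext j
    simp only [hZm, hZp]
    rcases le_total (Z j) 0 with hz | hz
    · rw [max_eq_left (by linarith), max_eq_right hz]; ring
    · rw [max_eq_right (by linarith), max_eq_left hz]; ring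
  have htm : ∀ i, tmul M Zm i = tmul M Zp i - tmul M Z i := by
    intro i; rw [hZmZ, tmul_sub]
  have hZpmem : Zp ∈ SOL M Q := by
    refine ⟨fun i => le_max_right _ _, fun i => ?_, ?_⟩
    · simp only [hQ]
      have := le_max_right (tmul M Z i) 0
      linarith
    · apply Finset.sum_eq_zero
      intro i _
      rcases le_or_gt (Z i) 0 with hz | hz
      · have : Zp i = 0 := max_eq_right hz
        rw [this, zero_mul]
      · have hmz : tmul M Z i ≤ 0 := nonpos_of_mul_nonpos_right (by
          have := hZ i; nlinarith) hz
        have : tmul M Zp i + Q i = 0 := by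
          simp only [hQ]; rw [max_eq_right hmz]; ring
        show Zp i * (tmul M Zp i + Q i) = 0
        rw [this, mul_zero]
  have hZmmem : Zm ∈ SOL M Q := by
    refine ⟨fun i => le_max_right _ _, fun i => ?_, ?_⟩
    · rw [htm]
      simp only [hQ]
      have := le_max_left (tmul M Z i) 0
      linarith
    · apply Finset.sum_eq_zero
      intro i _
      rcases le_or_gt 0 (Z i) with hz | hz
      · have : Zm i = 0 := max_eq_right (by linarith)
        rw [this, zero_mul]
      · have hmz : 0 ≤ tmul M Z i := by nlinarith [hZ i]
        have : tmul M Zm i + Q i = 0 := by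
          rw [htm]; simp only [hQ]; rw [max_eq_left hmz]; ring
        show Zm i * (tmul M Zm i + Q i) = 0
        rw [this, mul_zero]
  have hWmem := (h Q) hZpmem hZmmem (by norm_num : (0:ℝ) ≤ 1/2)
    (by norm_num : (0:ℝ) ≤ 1/2) (by norm_num)
  set W : (Fin m → Fin n) → ℝ := (1/2 : ℝ) • Zp + (1/2 : ℝ) • Zm with hW
  obtain ⟨hW1, hW2, hW3⟩ := hWmem
  have hterm : ∀ i, W i * (tmul M W i + Q i) = 0 := by
    have := (Finset.sum_eq_zero_iff_of_nonneg (fun i _ =>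
      mul_nonneg (hW1 i) (hW2 i))).mp hW3
    intro i; exact this i (Finset.mem_univ i)
  intro i
  have hWi : W i = (Zp i + Zm i) / 2 := by
    simp only [hW, Pi.add_apply, Pi.smul_apply, smul_eq_mul]; ring
  have hMWQ : tmul M W i + Q i = (max (tmul M Z i) 0 + max (-(tmul M Z i)) 0) / 2 := by
    rw [hW, tmul_combo, htm]
    simp only [hQ]
    rcases le_total (tmul M Z i) 0 with hz | hz
    · rw [max_eq_right hz, max_eq_left (by linarith)]; ring
    · rw [max_eq_left hz, max_eq_right (by linarith)]; ring
  have key := hterm i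
  rw [hWi, hMWQ] at key
  have habsZ : Zp i + Zm i = |Z i| := by
    simp only [hZp, hZm]
    rcases le_total (Z i) 0 with hz | hz
    · rw [max_eq_right hz, max_eq_left (by linarith), abs_of_nonpos hz]; ring
    · rw [max_eq_left hz, max_eq_right (by linarith), abs_of_nonneg hz]; ring
  have habsM : max (tmul M Z i) 0 + max (-(tmul M Z i)) 0 = |tmul M Z i| := by
    rcases le_total (tmul M Z i) 0 with hz | hz
    · rw [max_eq_right hz, max_eq_left (by linarith), abs_of_nonpos hz]; ring
    · rw [max_eq_left hz, max_eq_right (by linarith), abs_of_nonneg hz]; ring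
  rw [habsZ, habsM] at key
  have : |Z i * tmul M Z i| = 0 := by
    rw [abs_mul]; nlinarith [key]
  exact abs_eq_zero.mp this
end

section
/- For any M ∈ R^{[2m,n]} and Q ∈ R^{[m,n]}, the solution set SOL(M,Q) is convex if and only if for any two solutions Z¹, Z² ∈ SOL(M,Q) the cross-complementarity conditions ⟨Z¹, MZ² + Q⟩ = 0 and ⟨Z², MZ¹ + Q⟩ = 0 hold. -/
open Finset

lemma tmul_lin {m n : ℕ} (M : (Fin m → Fin n) → (Fin m → Fin n) → ℝ)
    (a b : ℝ) (Z1 Z2 : (Fin m → Fin n) → ℝ) (i : Fin m → Fin n) :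
    tmul M (fun j => a * Z1 j + b * Z2 j) i = a * tmul M Z1 i + b * tmul M Z2 i := by
  simp only [tmul, Finset.mul_sum, ← Finset.sum_add_distrib]
  exact Finset.sum_congr rfl fun j _ => by ring

lemma tinner_expand {m n : ℕ} (M : (Fin m → Fin n) → (Fin m → Fin n) → ℝ)
    (Q : (Fin m → Fin n) → ℝ) (a b : ℝ) (hab : a + b = 1)
    (Z1 Z2 : (Fin m → Fin n) → ℝ) :
    tinner (fun j => a * Z1 j + b * Z2 j)
        (fun i => tmul M (fun j => a * Z1 j + b * Z2 j) i + Q i)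
      = a * a * tinner Z1 (fun i => tmul M Z1 i + Q i)
      + a * b * tinner Z1 (fun i => tmul M Z2 i + Q i)
      + a * b * tinner Z2 (fun i => tmul M Z1 i + Q i)
      + b * b * tinner Z2 (fun i => tmul M Z2 i + Q i) := by
  have hb : b = 1 - a := by linarith
  subst hb
  simp only [tinner, tmul_lin, Finset.mul_sum, ← Finset.sum_add_distrib]
  exact Finset.sum_congr rfl fun i _ => by ring

lemma tinner_nonneg {m n : ℕ} (A B : (Fin m → Fin n) → ℝ)
    (hA : ∀ i, 0 ≤ A i) (hB : ∀ i, 0 ≤ B i) : 0 ≤ tinner A B :=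
  Finset.sum_nonneg fun i _ => mul_nonneg (hA i) (hB i)

theorem stmt8 {m n : ℕ} (M : (Fin m → Fin n) → (Fin m → Fin n) → ℝ)
    (Q : (Fin m → Fin n) → ℝ) :
    Convex ℝ (SOL M Q) ↔
      ∀ Z1 ∈ SOL M Q, ∀ Z2 ∈ SOL M Q,
        tinner Z1 (fun i => tmul M Z2 i + Q i) = 0 ∧
        tinner Z2 (fun i => tmul M Z1 i + Q i) = 0 := by
  constructor
  · intro hconv Z1 h1 Z2 h2
    have hW : (fun j => (1/2 : ℝ) * Z1 j + (1/2 : ℝ) * Z2 j) ∈ SOL M Q := by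
      have hW0 := hconv h1 h2 (by norm_num : (0:ℝ) ≤ 1/2) (by norm_num : (0:ℝ) ≤ 1/2)
        (by norm_num)
      have heq : (1/2 : ℝ) • Z1 + (1/2 : ℝ) • Z2
          = fun j => (1/2 : ℝ) * Z1 j + (1/2 : ℝ) * Z2 j := by
        funext j; simp [Pi.smul_apply, smul_eq_mul]
      rwa [heq] at hW0
    have hexp := tinner_expand M Q (1/2) (1/2) (by norm_num) Z1 Z2
    rw [hW.2.2, h1.2.2, h2.2.2] at hexp
    have h12 : 0 ≤ tinner Z1 (fun i => tmul M Z2 i + Q i) :=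
      tinner_nonneg _ _ h1.1 h2.2.1
    have h21 : 0 ≤ tinner Z2 (fun i => tmul M Z1 i + Q i) :=
      tinner_nonneg _ _ h2.1 h1.2.1
    constructor <;> linarith
  · intro h Z1 h1 Z2 h2 a b ha hb hab
    obtain ⟨c12, c21⟩ := h Z1 h1 Z2 h2
    have heq : a • Z1 + b • Z2 = fun j => a * Z1 j + b * Z2 j := by
      funext j; simp [Pi.smul_apply, smul_eq_mul]
    rw [heq]
    refine ⟨fun i => add_nonneg (mul_nonneg ha (h1.1 i)) (mul_nonneg hb (h2.1 i)),
      fun i => ?_, ?_⟩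
    · rw [tmul_lin]
      have : a * tmul M Z1 i + b * tmul M Z2 i + Q i
          = a * (tmul M Z1 i + Q i) + b * (tmul M Z2 i + Q i) := by
        linear_combination (-(Q i)) * hab
      rw [this]
      exact add_nonneg (mul_nonneg ha (h1.2.1 i)) (mul_nonneg hb (h2.2.1 i))
    · rw [tinner_expand M Q a b hab, h1.2.2, h2.2.2, c12, c21]; ring
end
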